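/- Let 𝔽 be a finite field in which −1 is not a square, and let H ∈ 𝔽[x₁,…,xₙ] be a nonconstant polynomial in which every variable xᵢ appears with individual degree at most 1 (so that H is multilinear). Set P = H² + 1. Then P has no zero in 𝔽ⁿ, and every polynomial R ∈ 𝔽[x₁,…,xₙ] satisfying R(x)·P(x) = 1 for all x ∈ 𝔽ⁿ has total degree at least deg(H)·(|𝔽|−1) = (1/2)·deg(P)·(|𝔽|−1). -/

import Mathlib

open Finset MvPolynomial Function

section aux
variable {F : Type*} [Field F] [Fintype F] {ι : Type*} [Fintype ι] [DecidableEq ι]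

/-- Functions supported on `T`. -/
noncomputable def ETs (F : Type*) [Field F] [Fintype F] {ι : Type*} [Fintype ι] [DecidableEq ι]
    (T : Finset ι) : Finset (ι → F) :=
  haveI := Classical.decEq F
  Fintype.piFinset (fun j => if j ∈ T then (univ : Finset F) else {0})

lemma mem_ETs {T : Finset ι} {x : ι → F} : x ∈ ETs F T ↔ ∀ j ∉ T, x j = 0 := by
  classical
  unfold ETs
  rw [Fintype.mem_piFinset]
  constructor
  · intro h j hj
    have := h j
    simp [if_neg hj] at this
    convert this
  · intro h j
    by_cases hj : j ∈ T
    · simp [hj]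
    · simp [hj, h j hj]

lemma card_ETs (T : Finset ι) : (ETs F T).card = Fintype.card F ^ T.card := by
  classical
  unfold ETs
  rw [Fintype.card_piFinset]
  calc ∏ j : ι, (if j ∈ T then (univ : Finset F) else {0}).card
      = ∏ j : ι, (if j ∈ T then Fintype.card F else 1) := by
        apply Finset.prod_congr rfl; intro j _; split <;> simp
    _ = ∏ j ∈ univ ∩ T, Fintype.card F := Finset.prod_ite_mem univ T (fun _ => Fintype.card F)
    _ = Fintype.card F ^ T.card := by rw [Finset.univ_inter, Finset.prod_const]

lemma cast_card_ETs (T : Finset ι) :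
    ((ETs F T).card : F) = if T = ∅ then 1 else 0 := by
  rw [card_ETs]
  split
  · subst ‹T = ∅›; simp
  · have : T.card ≠ 0 := by simpa [Finset.card_eq_zero] using ‹T ≠ ∅›
    rw [Nat.cast_pow, FiniteField.cast_card_eq_zero, zero_pow this]

lemma sum_ETs_insert {i : ι} {T : Finset ι} (hi : i ∉ T) (f : (ι → F) → F) :
    ∑ x ∈ ETs F (insert i T), f x = ∑ u : F, ∑ x ∈ ETs F T, f (Function.update x i u) := by
  classical
  rw [← Finset.sum_product']
  refine Finset.sum_nbij' (fun x => (x i, Function.update x i 0))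
    (fun p => Function.update p.2 i p.1) ?_ ?_ ?_ ?_ ?_
  · intro x hx
    rw [mem_ETs] at hx
    refine Finset.mk_mem_product (Finset.mem_univ _) ?_
    rw [mem_ETs]
    intro j hj
    by_cases hij : j = i
    · subst hij; simp
    · rw [Function.update_of_ne hij]
      exact hx j (by simp [hij, hj])
  · intro p hp
    rw [Finset.mem_product, mem_ETs] at hp
    rw [mem_ETs]
    intro j hj
    simp only [Finset.mem_insert, not_or] at hj
    show Function.update p.2 i p.1 j = 0
    rw [Function.update_of_ne hj.1]
    exact hp.2 j hj.2
  · intro x hx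
    rw [mem_ETs] at hx
    funext j
    by_cases hij : j = i
    · subst hij; simp
    · simp [Function.update_of_ne hij]
  · intro p hp
    rw [Finset.mem_product, mem_ETs] at hp
    show (_, _) = p
    have h2 : Function.update (Function.update p.2 i p.1) i 0 = p.2 := by
      funext j
      by_cases hij : j = i
      · subst hij; simp [hp.2 j hi]
      · simp [Function.update_of_ne hij]
    simp [h2]
  · intro x hx
    congr 1
    funext j
    by_cases hij : j = i
    · subst hij; simp
    · simp [Function.update_of_ne hij]

end aux

section aux2
set_option linter.unusedSectionVars false
variable {F : Type*} [Field F] [Fintype F] {ι : Type*} [Fintype ι] [DecidableEq ι]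

/-- multilinear function given by coefficient family `c` on subsets of `T`. -/
def mlFun (c : Finset ι → F) (T : Finset ι) (x : ι → F) : F :=
  ∑ U ∈ T.powerset, c U * ∏ j ∈ U, x j

lemma mlFun_update_of_not_mem {c : Finset ι → F} {T : Finset ι} {i : ι} (hi : i ∉ T)
    (x : ι → F) (u : F) : mlFun c T (Function.update x i u) = mlFun c T x := by
  unfold mlFun
  refine Finset.sum_congr rfl fun U hU => ?_
  rw [Finset.mem_powerset] at hU
  congr 1
  refine Finset.prod_congr rfl fun j hj => ?_
  have : j ≠ i := fun h => hi (h ▸ hU hj)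
  rw [Function.update_of_ne this]

lemma mlFun_insert {c : Finset ι → F} {T : Finset ι} {i : ι} (hi : i ∉ T) (y : ι → F) :
    mlFun c (insert i T) y = mlFun c T y + y i * mlFun (fun U => c (insert i U)) T y := by
  unfold mlFun
  rw [Finset.powerset_insert, Finset.sum_union]
  · congr 1
    rw [Finset.sum_image (f := fun U => c U * ∏ j ∈ U, y j)
      (fun U hU V hV h => by
        rw [Finset.mem_coe, Finset.mem_powerset] at hU hV
        have hU' : i ∉ U := fun hiU => hi (hU hiU)
        have hV' : i ∉ V := fun hiV => hi (hV hiV)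
        rw [← Finset.erase_insert hU', ← Finset.erase_insert hV', h]), Finset.mul_sum]
    refine Finset.sum_congr rfl fun U hU => ?_
    rw [Finset.mem_powerset] at hU
    have hU' : i ∉ U := fun hiU => hi (hU hiU)
    rw [Finset.prod_insert hU']
    ring
  · rw [Finset.disjoint_right]
    intro U hU hU'
    rw [Finset.mem_image] at hU
    obtain ⟨V, hV, rfl⟩ := hU
    rw [Finset.mem_powerset] at hU'
    exact hi (hU' (Finset.mem_insert_self i V))

lemma sum_linear_indicator (a b : F) :
    haveI := Classical.decEq F
    ∑ u : F, (if a + u * b = 0 then (1:F) else 0) = if b = 0 then 0 else 1 := by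
  classical
  by_cases hb : b = 0
  · subst hb
    by_cases ha : a = 0
    · subst ha
      simp [FiniteField.cast_card_eq_zero]
    · simp [ha]
  · rw [if_neg hb]
    have : ∀ u : F, (a + u * b = 0) ↔ u = -a / b := by
      intro u
      constructor
      · intro h; field_simp; linear_combination h
      · intro h; subst h; field_simp; ring
    calc ∑ u : F, (if a + u * b = 0 then (1:F) else 0)
        = ∑ u : F, (if u = -a / b then (1:F) else 0) := by
          refine Finset.sum_congr rfl fun u _ => ?_; rw [if_congr (this u) rfl rfl]
      _ = 1 := by rw [Finset.sum_ite_eq' Finset.univ (-a/b) (fun _ => (1:F))]; simp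

lemma sum_affine (a b : F) (hb : b ≠ 0) (f : F → F) :
    ∑ u : F, f (a + u * b) = ∑ v : F, f v := by
  apply Fintype.sum_bijective (fun u : F => a + u * b)
  · constructor
    · intro u v h
      have h' : u * b = v * b := by linear_combination h
      exact mul_right_cancel₀ hb h'
    · intro v
      exact ⟨(v - a) / b, by field_simp; ring⟩
  · intro u; rfl

/-- number of zeros (as element of F) of a multilinear function with full top coefficient -/
lemma zsum_eq (T : Finset ι) : ∀ c : Finset ι → F, c T ≠ 0 →
    haveI := Classical.decEq F
    ∑ x ∈ ETs F T, (if mlFun c T x = 0 then (1:F) else 0)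
      = if T = ∅ then 0 else (-1)^(T.card+1) := by
  classical
  induction T using Finset.induction_on with
  | empty =>
    intro c hc
    rw [if_pos rfl]
    refine Finset.sum_eq_zero fun x _ => ?_
    have : mlFun c ∅ x = c ∅ := by simp [mlFun]
    rw [this, if_neg hc]
  | @insert i T hi ih =>
    intro c hc
    rw [sum_ETs_insert hi]
    rw [Finset.sum_comm]
    have key : ∀ x ∈ ETs F T,
        ∑ u : F, (if mlFun c (insert i T) (Function.update x i u) = 0 then (1:F) else 0)
        = if mlFun (fun U => c (insert i U)) T x = 0 then 0 else 1 := by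
      intro x hx
      have : ∀ u : F, mlFun c (insert i T) (Function.update x i u)
          = mlFun c T x + u * mlFun (fun U => c (insert i U)) T x := by
        intro u
        rw [mlFun_insert hi, mlFun_update_of_not_mem hi, mlFun_update_of_not_mem hi,
          Function.update_self]
      calc ∑ u : F, (if mlFun c (insert i T) (Function.update x i u) = 0 then (1:F) else 0)
          = ∑ u : F, (if mlFun c T x + u * mlFun (fun U => c (insert i U)) T x = 0
              then (1:F) else 0) := by
            refine Finset.sum_congr rfl fun u _ => ?_; rw [this u]
        _ = _ := sum_linear_indicator _ _
    rw [Finset.sum_congr rfl key]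
    have expand : ∀ x ∈ ETs F T,
        (if mlFun (fun U => c (insert i U)) T x = 0 then (0:F) else 1)
        = 1 - (if mlFun (fun U => c (insert i U)) T x = 0 then (1:F) else 0) := by
      intro x _; split <;> ring
    rw [Finset.sum_congr rfl expand, Finset.sum_sub_distrib, Finset.sum_const, nsmul_eq_mul,
      mul_one, cast_card_ETs, ih (fun U => c (insert i U)) (by simpa using hc)]
    rw [if_neg (Finset.insert_ne_empty i T)]
    by_cases hT : T = ∅
    · subst hT; simp
    · rw [if_neg hT, if_neg hT, Finset.card_insert_of_notMem hi]
      ring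

end aux2

section aux3
set_option linter.unusedSectionVars false
variable {F : Type*} [Field F] [Fintype F]

lemma sq_add_one_ne_zero (hsq : ¬ IsSquare (-1 : F)) (u : F) : u ^ 2 + 1 ≠ 0 := by
  intro h
  exact hsq ⟨u, by linear_combination -h - u^2 + u*u⟩

lemma my_two_ne_zero (hsq : ¬ IsSquare (-1 : F)) : (2 : F) ≠ 0 := by
  intro h
  exact hsq ⟨1, by linear_combination -h⟩

lemma cayley_ne (h2 : (2:F) ≠ 0) {u : F} (hu : u ≠ -1) : (1 - u) / (1 + u) ≠ -1 := by
  have h1u : (1:F) + u ≠ 0 := fun h => hu (by linear_combination h)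
  intro h
  rw [div_eq_iff h1u] at h
  exact h2 (by linear_combination h)

lemma sum_inv_sq_add_one (hsq : ¬ IsSquare (-1 : F)) :
    ∑ u : F, (u ^ 2 + 1)⁻¹ = (2:F)⁻¹ := by
  classical
  have h2 := my_two_ne_zero hsq
  have hne := sq_add_one_ne_zero hsq
  have hodd : ∑ v : F, v * (v ^ 2 + 1)⁻¹ = 0 := by
    have h1 : ∑ v : F, v * (v ^ 2 + 1)⁻¹ = ∑ v : F, (-v) * ((-v) ^ 2 + 1)⁻¹ :=
      Fintype.sum_equiv (Equiv.neg F) _ _ (fun v => by simp)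
    have h2' : ∑ v : F, (-v) * ((-v) ^ 2 + 1)⁻¹ = - ∑ v : F, v * (v ^ 2 + 1)⁻¹ := by
      rw [← Finset.sum_neg_distrib]
      refine Finset.sum_congr rfl fun v _ => ?_
      ring_nf
    have h3 : (2:F) * ∑ v : F, v * (v ^ 2 + 1)⁻¹ = 0 := by linear_combination h1.trans h2'
    rcases mul_eq_zero.mp h3 with h | h
    · exact absurd h h2
    · exact h
  have cayley : ∑ u ∈ Finset.univ.erase (-1 : F), (u ^ 2 + 1)⁻¹
      = ∑ v ∈ Finset.univ.erase (-1 : F), ((2:F)⁻¹ + v * (v ^ 2 + 1)⁻¹) := by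
    refine Finset.sum_nbij' (fun u => (1 - u) / (1 + u)) (fun v => (1 - v) / (1 + v))
      ?_ ?_ ?_ ?_ ?_
    · intro u hu
      rw [Finset.mem_erase] at hu
      exact Finset.mem_erase.mpr ⟨cayley_ne h2 hu.1, Finset.mem_univ _⟩
    · intro v hv
      rw [Finset.mem_erase] at hv
      exact Finset.mem_erase.mpr ⟨cayley_ne h2 hv.1, Finset.mem_univ _⟩
    · intro u hu
      rw [Finset.mem_erase] at hu
      have h1u : (1:F) + u ≠ 0 := fun h => hu.1 (by linear_combination h)
      set w := (1 - u) / (1 + u) with hwdef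
      have hw : w * (1 + u) = 1 - u := div_mul_cancel₀ _ h1u
      have hw1 : (1:F) + w ≠ 0 := by
        have := cayley_ne h2 hu.1
        rw [← hwdef] at this
        exact fun h => this (by linear_combination h)
      show (1 - w) / (1 + w) = u
      rw [div_eq_iff hw1]
      linear_combination -hw
    · intro v hv
      rw [Finset.mem_erase] at hv
      have h1v : (1:F) + v ≠ 0 := fun h => hv.1 (by linear_combination h)
      set w := (1 - v) / (1 + v) with hwdef
      have hw : w * (1 + v) = 1 - v := div_mul_cancel₀ _ h1v
      have hw1 : (1:F) + w ≠ 0 := by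
        have := cayley_ne h2 hv.1
        rw [← hwdef] at this
        exact fun h => this (by linear_combination h)
      show (1 - w) / (1 + w) = v
      rw [div_eq_iff hw1]
      linear_combination -hw
    · intro u hu
      rw [Finset.mem_erase] at hu
      have h1u : (1:F) + u ≠ 0 := fun h => hu.1 (by linear_combination h)
      set w := (1 - u) / (1 + u) with hwdef
      have hw : w * (1 + u) = 1 - u := div_mul_cancel₀ _ h1u
      have ha := hne u
      have hb := hne w
      clear_value w
      beta_reduce
      field_simp
      linear_combination -((u - 1) * w + (1 + u)) * hw
  have hcard : ((Finset.univ.erase (-1 : F)).card : F) = -1 := by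
    rw [Finset.card_erase_of_mem (Finset.mem_univ _), Finset.card_univ]
    rw [Nat.cast_sub Fintype.card_pos, FiniteField.cast_card_eq_zero]
    simp
  have herase : ∑ v ∈ Finset.univ.erase (-1 : F), v * (v ^ 2 + 1)⁻¹ = (2:F)⁻¹ := by
    rw [Finset.sum_erase_eq_sub (Finset.mem_univ _), hodd]
    norm_num
  have hsplit : ∑ u : F, (u ^ 2 + 1)⁻¹
      = ((-1:F) ^ 2 + 1)⁻¹ + ∑ u ∈ Finset.univ.erase (-1 : F), (u ^ 2 + 1)⁻¹ :=
    (Finset.add_sum_erase _ _ (Finset.mem_univ _)).symm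
  rw [hsplit, cayley, Finset.sum_add_distrib, Finset.sum_const, nsmul_eq_mul, hcard, herase]
  norm_num
end aux3

section aux4
set_option linter.unusedSectionVars false
variable {F : Type*} [Field F] [Fintype F] {ι : Type*} [Fintype ι] [DecidableEq ι]

lemma sum_inv_affine (hsq : ¬ IsSquare (-1 : F)) (a b : F) :
    haveI := Classical.decEq F
    ∑ u : F, ((a + u * b) ^ 2 + 1)⁻¹
      = if b = 0 then 0 else ∑ v : F, (v ^ 2 + 1)⁻¹ := by
  classical
  by_cases hb : b = 0
  · subst hb
    rw [if_pos rfl]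
    simp only [mul_zero, add_zero]
    rw [Finset.sum_const, nsmul_eq_mul, Finset.card_univ, FiniteField.cast_card_eq_zero,
      zero_mul]
  · rw [if_neg hb]
    exact sum_affine a b hb fun v => (v ^ 2 + 1)⁻¹

lemma ssum_insert (hsq : ¬ IsSquare (-1 : F)) (i : ι) (s : Finset ι) (hi : i ∉ s)
    (c : Finset ι → F) (hc : c (insert i s) ≠ 0) :
    ∑ x ∈ ETs F (insert i s), ((mlFun c (insert i s) x) ^ 2 + 1)⁻¹
      = (2:F)⁻¹ * (-1) ^ s.card := by
  classical
  rw [sum_ETs_insert hi, Finset.sum_comm]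
  have key : ∀ x ∈ ETs F s,
      ∑ u : F, ((mlFun c (insert i s) (Function.update x i u)) ^ 2 + 1)⁻¹
      = if mlFun (fun U => c (insert i U)) s x = 0 then 0 else (2:F)⁻¹ := by
    intro x hx
    have hdec : ∀ u : F, mlFun c (insert i s) (Function.update x i u)
        = mlFun c s x + u * mlFun (fun U => c (insert i U)) s x := by
      intro u
      rw [mlFun_insert hi, mlFun_update_of_not_mem hi, mlFun_update_of_not_mem hi,
        Function.update_self]
    calc ∑ u : F, ((mlFun c (insert i s) (Function.update x i u)) ^ 2 + 1)⁻¹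
        = ∑ u : F, ((mlFun c s x + u * mlFun (fun U => c (insert i U)) s x) ^ 2 + 1)⁻¹ := by
          refine Finset.sum_congr rfl fun u _ => ?_; rw [hdec u]
      _ = if mlFun (fun U => c (insert i U)) s x = 0 then 0 else ∑ v : F, (v ^ 2 + 1)⁻¹ :=
          sum_inv_affine hsq _ _
      _ = if mlFun (fun U => c (insert i U)) s x = 0 then 0 else (2:F)⁻¹ := by
          rw [sum_inv_sq_add_one hsq]
  rw [Finset.sum_congr rfl key]
  have expand : ∀ x ∈ ETs F s,
      (if mlFun (fun U => c (insert i U)) s x = 0 then (0:F) else (2:F)⁻¹)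
      = (2:F)⁻¹ * (1 - (if mlFun (fun U => c (insert i U)) s x = 0 then (1:F) else 0)) := by
    intro x _; split <;> ring
  rw [Finset.sum_congr rfl expand, ← Finset.mul_sum, Finset.sum_sub_distrib, Finset.sum_const,
    nsmul_eq_mul, mul_one, cast_card_ETs,
    zsum_eq s (fun U => c (insert i U)) (by simpa using hc)]
  by_cases hs : s = ∅
  · subst hs; simp
  · rw [if_neg hs, if_neg hs, zero_sub]
    have h3 : -(-1:F) ^ (s.card + 1) = (-1) ^ s.card := by rw [pow_succ]; ring
    rw [h3]

lemma ssum (hsq : ¬ IsSquare (-1 : F)) (T : Finset ι) (hT : T.Nonempty)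
    (c : Finset ι → F) (hc : c T ≠ 0) :
    ∑ x ∈ ETs F T, ((mlFun c T x) ^ 2 + 1)⁻¹ = (2:F)⁻¹ * (-1) ^ (T.card + 1) := by
  obtain ⟨i, hi⟩ := hT
  have h1 : insert i (T.erase i) = T := Finset.insert_erase hi
  have h2 := ssum_insert hsq i (T.erase i) (Finset.notMem_erase i T) c (by rw [h1]; exact hc)
  rw [h1] at h2
  rw [h2, Finset.card_erase_of_mem hi]
  congr 1
  have hcard : 1 ≤ T.card := Finset.card_pos.mpr ⟨i, hi⟩
  have : T.card + 1 = (T.card - 1) + 2 := by omega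
  rw [this, pow_add]
  norm_num

end aux4

section auxpoly
set_option linter.unusedSectionVars false
variable {F : Type*} [Field F] [Fintype F] {n : ℕ}

noncomputable def mon (U : Finset (Fin n)) : (Fin n) →₀ ℕ := ∑ j ∈ U, Finsupp.single j 1

lemma mon_apply (U : Finset (Fin n)) (j : Fin n) : mon U j = if j ∈ U then 1 else 0 := by
  classical
  unfold mon
  rw [Finset.sum_apply']
  rw [Finset.sum_congr rfl (fun j' _ => Finsupp.single_apply)]
  exact Finset.sum_ite_eq' U j (fun _ => 1)

lemma mon_support (U : Finset (Fin n)) : (mon U).support = U := by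
  ext j
  rw [Finsupp.mem_support_iff, mon_apply]
  split <;> simp_all

lemma mon_support_eq {m : (Fin n) →₀ ℕ} (hm : ∀ i, m i ≤ 1) : mon m.support = m := by
  ext j
  rw [mon_apply]
  split
  · rename_i h
    have h1 := Finsupp.mem_support_iff.mp h
    have h2 := hm j
    omega
  · rename_i h
    have := Finsupp.notMem_support_iff.mp h
    omega

lemma mon_degree (U : Finset (Fin n)) : ((mon U).sum fun _ e => e) = U.card := by
  rw [Finsupp.sum, mon_support]
  rw [Finset.sum_congr rfl (fun j hj => by rw [mon_apply, if_pos hj])]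
  simp

lemma eval_multilinear (H : MvPolynomial (Fin n) F) (hml : ∀ i, H.degreeOf i ≤ 1)
    (T : Finset (Fin n)) (x : Fin n → F) (hx : x ∈ ETs F T) :
    MvPolynomial.eval x H = mlFun (fun U => H.coeff (mon U)) T x := by
  classical
  have hm1 : ∀ m ∈ H.support, ∀ i, m i ≤ 1 := fun m hm i =>
    MvPolynomial.degreeOf_le_iff.mp (hml i) m hm
  rw [MvPolynomial.eval_eq]
  unfold mlFun
  rw [← Finset.sum_filter_of_ne (p := fun m => m.support ⊆ T)
    (f := fun d => H.coeff d * ∏ i ∈ d.support, x i ^ d i) ?hne]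
  case hne =>
    intro m hm hne0
    beta_reduce at hne0 ⊢
    by_contra hsub
    obtain ⟨j, hj1, hj2⟩ := Finset.not_subset.mp hsub
    apply hne0
    have hxj : x j = 0 := mem_ETs.mp hx j hj2
    rw [Finset.prod_eq_zero hj1]
    · ring
    · rw [hxj]
      rw [zero_pow]
      exact fun h => (Finsupp.mem_support_iff.mp hj1) h
  rw [← Finset.sum_filter_of_ne (s := T.powerset) (p := fun U => mon U ∈ H.support)
    (f := fun U => H.coeff (mon U) * ∏ j ∈ U, x j) ?hne2]
  case hne2 =>
    intro U hU hne0
    beta_reduce at hne0 ⊢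
    rw [MvPolynomial.mem_support_iff]
    intro h
    apply hne0
    rw [h, zero_mul]
  refine Finset.sum_nbij' (fun m => m.support) (fun U => mon U) ?_ ?_ ?_ ?_ ?_
  · intro m hm
    rw [Finset.mem_filter] at hm ⊢
    refine ⟨Finset.mem_powerset.mpr hm.2, ?_⟩
    rw [mon_support_eq (hm1 m hm.1)]
    exact hm.1
  · intro U hU
    rw [Finset.mem_filter] at hU ⊢
    refine ⟨hU.2, ?_⟩
    rw [mon_support]
    exact Finset.mem_powerset.mp hU.1
  · intro m hm
    rw [Finset.mem_filter] at hm
    exact mon_support_eq (hm1 m hm.1)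
  · intro U hU
    exact mon_support U
  · intro m hm
    rw [Finset.mem_filter] at hm
    rw [mon_support_eq (hm1 m hm.1)]
    congr 1
    refine Finset.prod_congr rfl fun j hj => ?_
    have h1 : 1 ≤ m j := Nat.one_le_iff_ne_zero.mpr (Finsupp.mem_support_iff.mp hj)
    have h2 := hm1 m hm.1 j
    have : m j = 1 := le_antisymm h2 h1
    rw [this, pow_one]

lemma coeff_double_sq (H : MvPolynomial (Fin n) F) (hml : ∀ i, H.degreeOf i ≤ 1)
    (m₀ : (Fin n) →₀ ℕ) (hm₀ : m₀ ∈ H.support) :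
    (H ^ 2).coeff (m₀ + m₀) = (H.coeff m₀) ^ 2 := by
  classical
  have hm1 : ∀ m ∈ H.support, ∀ i, m i ≤ 1 := fun m hm i =>
    MvPolynomial.degreeOf_le_iff.mp (hml i) m hm
  rw [sq, MvPolynomial.coeff_mul]
  rw [Finset.sum_eq_single_of_mem (m₀, m₀) (Finset.HasAntidiagonal.mem_antidiagonal.mpr rfl)]
  · exact (sq _).symm
  · rintro ⟨a, b⟩ hab hne
    rw [Finset.HasAntidiagonal.mem_antidiagonal] at hab
    by_contra h0
    have ha : a ∈ H.support := by
      rw [MvPolynomial.mem_support_iff]; intro h; exact h0 (by rw [h, zero_mul])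
    have hb : b ∈ H.support := by
      rw [MvPolynomial.mem_support_iff]; intro h; exact h0 (by rw [h, mul_zero])
    apply hne
    have key : ∀ i, a i = m₀ i ∧ b i = m₀ i := by
      intro i
      have h1 := hm1 a ha i
      have h2 := hm1 b hb i
      have h3 := hm1 m₀ hm₀ i
      have h4 : a i + b i = m₀ i + m₀ i := by
        have := congrArg (fun f => f i) hab
        simpa [Finsupp.add_apply] using this
      omega
    have ha' : a = m₀ := Finsupp.ext fun i => (key i).1
    have hb' : b = m₀ := Finsupp.ext fun i => (key i).2
    rw [ha', hb']

end auxpoly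

/-- Lower bound showing dependence on the degree d. -/
theorem statement10 {F : Type*} [Field F] [Fintype F] (hsq : ¬ IsSquare (-1 : F)) {n : ℕ}
    (H P : MvPolynomial (Fin n) F) (hHnc : H.totalDegree ≠ 0)
    (hml : ∀ i, H.degreeOf i ≤ 1) (hP : P = H ^ 2 + 1) :
    (∀ x : Fin n → F, MvPolynomial.eval x P ≠ 0) ∧
    (∀ R : MvPolynomial (Fin n) F,
      (∀ x : Fin n → F, MvPolynomial.eval x R * MvPolynomial.eval x P = 1) →
      H.totalDegree * (Fintype.card F - 1) ≤ R.totalDegree) ∧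
    2 * (H.totalDegree * (Fintype.card F - 1)) = P.totalDegree * (Fintype.card F - 1) := by
  classical
  have hq2 : 2 ≤ Fintype.card F := Fintype.one_lt_card
  -- Part 1
  have hPne : ∀ x : Fin n → F, MvPolynomial.eval x P ≠ 0 := by
    intro x h
    rw [hP] at h
    simp only [map_add, map_pow, map_one] at h
    exact sq_add_one_ne_zero hsq (MvPolynomial.eval x H) h
  -- top monomial
  have hH0 : H ≠ 0 := fun h => hHnc (by rw [h, MvPolynomial.totalDegree_zero])
  obtain ⟨m₀, hm₀, hsup⟩ := Finset.exists_mem_eq_sup H.support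
      (MvPolynomial.support_nonempty.mpr hH0) (fun s => s.sum fun _ e => e)
  have hdeg : H.totalDegree = (m₀.sum fun _ e => e) := hsup
  have hm1 : ∀ m ∈ H.support, ∀ i, m i ≤ 1 := fun m hm i =>
    MvPolynomial.degreeOf_le_iff.mp (hml i) m hm
  set T := m₀.support with hT
  have hval : ∀ j ∈ T, m₀ j = 1 := fun j hj => le_antisymm (hm1 m₀ hm₀ j)
    (Nat.one_le_iff_ne_zero.mpr (Finsupp.mem_support_iff.mp hj))
  have hTcard : T.card = H.totalDegree := by
    have h0 : (m₀.sum fun _ e => e) = ∑ j ∈ T, m₀ j := rfl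
    rw [hdeg, h0, Finset.sum_congr rfl hval, Finset.sum_const, smul_eq_mul, mul_one]
  -- Part 3
  have hm₀ne : m₀ ≠ 0 := by
    intro h
    apply hHnc
    rw [hdeg, h]
    simp
  have hcoeffsq : (H ^ 2).coeff (m₀ + m₀) = (H.coeff m₀) ^ 2 := coeff_double_sq H hml m₀ hm₀
  have hPdeg : P.totalDegree = 2 * H.totalDegree := by
    rw [hP]
    apply le_antisymm
    · refine le_trans (MvPolynomial.totalDegree_add _ _) ?_
      rw [MvPolynomial.totalDegree_one]
      exact max_le (MvPolynomial.totalDegree_pow H 2) (Nat.zero_le _)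
    · have hmem : (m₀ + m₀) ∈ (H ^ 2 + 1).support := by
        rw [MvPolynomial.mem_support_iff, MvPolynomial.coeff_add, hcoeffsq,
          MvPolynomial.coeff_one, if_neg ?_, add_zero]
        · exact pow_ne_zero 2 (MvPolynomial.mem_support_iff.mp hm₀)
        · intro h
          apply hm₀ne
          refine Finsupp.ext fun i => ?_
          have h5 : m₀ i + m₀ i = 0 := by rw [← Finsupp.add_apply, ← h]; rfl
          simp only [Finsupp.coe_zero, Pi.zero_apply]
          omega
      have h1 := MvPolynomial.le_totalDegree hmem
      have h2 : ((m₀ + m₀).sum fun _ e => e) = 2 * H.totalDegree := by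
        rw [Finsupp.sum_add_index' (fun a => rfl) (fun a b₁ b₂ => rfl), ← hdeg]
        ring
      omega
  refine ⟨hPne, ?_, by rw [hPdeg]; ring⟩
  -- Part 2
  intro R hR
  by_contra hlt
  push_neg at hlt
  have hd1 : 1 ≤ H.totalDegree := Nat.one_le_iff_ne_zero.mpr hHnc
  have hdn : T.card ≤ n := le_trans (Finset.card_le_univ T) (by simp)
  set G := ∏ j ∈ Tᶜ, (1 - MvPolynomial.X j ^ (Fintype.card F - 1) : MvPolynomial (Fin n) F)
    with hG
  have hfac : ∀ j : Fin n,
      (1 - MvPolynomial.X j ^ (Fintype.card F - 1) : MvPolynomial (Fin n) F).totalDegree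
        ≤ Fintype.card F - 1 := by
    intro j
    rw [sub_eq_add_neg]
    refine le_trans (MvPolynomial.totalDegree_add _ _) ?_
    rw [MvPolynomial.totalDegree_one, MvPolynomial.totalDegree_neg,
      MvPolynomial.totalDegree_X_pow]
    simp
  have hGdeg : G.totalDegree ≤ (n - H.totalDegree) * (Fintype.card F - 1) := by
    refine le_trans (MvPolynomial.totalDegree_finset_prod _ _) ?_
    refine le_trans (Finset.sum_le_sum fun j _ => hfac j) ?_
    rw [Finset.sum_const, smul_eq_mul, Finset.card_compl, Fintype.card_fin, hTcard]
  have hRG : (R * G).totalDegree < (Fintype.card F - 1) * Fintype.card (Fin n) := by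
    refine lt_of_le_of_lt (MvPolynomial.totalDegree_mul R G) ?_
    rw [Fintype.card_fin]
    calc R.totalDegree + G.totalDegree
        < H.totalDegree * (Fintype.card F - 1) + (n - H.totalDegree) * (Fintype.card F - 1) :=
          add_lt_add_of_lt_of_le hlt hGdeg
      _ = (Fintype.card F - 1) * n := by
          rw [← add_mul, Nat.add_sub_cancel' (hTcard ▸ hdn), mul_comm]
  have hzero : ∑ x : Fin n → F, MvPolynomial.eval x (R * G) = 0 :=
    MvPolynomial.sum_eval_eq_zero _ hRG
  have hevalG : ∀ x : Fin n → F,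
      MvPolynomial.eval x G = ∏ j ∈ Tᶜ, (1 - x j ^ (Fintype.card F - 1)) := by
    intro x
    rw [hG, map_prod]
    exact Finset.prod_congr rfl fun j _ => by simp
  have hG1 : ∀ x ∈ ETs F T, MvPolynomial.eval x G = 1 := by
    intro x hx
    rw [hevalG]
    refine Finset.prod_eq_one fun j hj => ?_
    rw [mem_ETs.mp hx j (Finset.mem_compl.mp hj), zero_pow (by omega), sub_zero]
  have hG0 : ∀ x : Fin n → F, x ∉ ETs F T → MvPolynomial.eval x G = 0 := by
    intro x hx
    rw [hevalG]
    rw [mem_ETs] at hx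
    push_neg at hx
    obtain ⟨j, hj1, hj2⟩ := hx
    exact Finset.prod_eq_zero (Finset.mem_compl.mpr hj1)
      (by rw [FiniteField.pow_card_sub_one_eq_one _ hj2, sub_self])
  have hsplit : ∑ x : Fin n → F, MvPolynomial.eval x (R * G)
      = ∑ x ∈ ETs F T, MvPolynomial.eval x R := by
    rw [← Finset.sum_subset (Finset.subset_univ (ETs F T))
      (fun x _ hx => by rw [map_mul, hG0 x hx, mul_zero])]
    exact Finset.sum_congr rfl fun x hx => by rw [map_mul, hG1 x hx, mul_one]
  have hRinv : ∀ x ∈ ETs F T, MvPolynomial.eval x R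
      = ((mlFun (fun U => H.coeff (mon U)) T x) ^ 2 + 1)⁻¹ := by
    intro x hx
    have h1 := hR x
    have h2 : MvPolynomial.eval x P = (MvPolynomial.eval x H) ^ 2 + 1 := by
      rw [hP]; simp
    rw [h2, eval_multilinear H hml T x hx] at h1
    exact eq_inv_of_mul_eq_one_left h1
  have hTne : T.Nonempty := Finset.card_pos.mp (by omega)
  have hcT : (fun U => H.coeff (mon U)) T ≠ 0 := by
    have hmt : mon T = m₀ := mon_support_eq (hm1 m₀ hm₀)
    beta_reduce
    rw [hmt]
    exact MvPolynomial.mem_support_iff.mp hm₀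
  have hfinal := ssum hsq T hTne (fun U => H.coeff (mon U)) hcT
  rw [hsplit, Finset.sum_congr rfl hRinv, hfinal] at hzero
  have h2 : (2 : F) ≠ 0 := my_two_ne_zero hsq
  exact (mul_ne_zero (inv_ne_zero h2) (pow_ne_zero _ (by norm_num : (-1:F) ≠ 0))) hzero
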